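/- For any graph $G$, any edge $e \in E(G)$, and any nonnegative integer $q$: $\operatorname{Z}_q(G - e) \le \operatorname{Z}_q(G) + 1$. -/

import Mathlib

open SimpleGraph

namespace ZqGame

variable {V : Type*}

/-- A blue vertex `v` forces the white vertex `w`, where only white vertices in
`Wallow` are taken into account (used for Rule 3, where play is restricted to the
subgraph induced by the blue set together with the returned white components). -/
def ForceIn (G : SimpleGraph V) (B : Set V) (Wallow : Set V) (v w : V) : Prop :=
  v ∈ B ∧ w ∉ B ∧ w ∈ Wallow ∧ G.Adj v w ∧
    ∀ u, G.Adj v u → u ∉ B → u ∈ Wallow → u = w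

/-- The standard color change rule: `v` is blue and `w` is its unique white neighbor. -/
def Force (G : SimpleGraph V) (B : Set V) (v w : V) : Prop :=
  ForceIn G B Set.univ v w

/-- The white connected component of `G - B` containing the white vertex `w`. -/
def WhiteComp (G : SimpleGraph V) (B : Set V) (w : V) : Set V :=
  {x | Relation.ReflTransGen (fun a b => G.Adj a b ∧ a ∉ B ∧ b ∉ B) w x}

/-- `W` is a white component, i.e. a connected component of `G - B`. -/
def IsWhiteComp (G : SimpleGraph V) (B : Set V) (W : Set V) : Prop :=
  ∃ w, w ∉ B ∧ W = WhiteComp G B w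

/-- An active vertex: a blue vertex with at least two white neighbors. -/
def Active (G : SimpleGraph V) (B : Set V) (a : V) : Prop :=
  a ∈ B ∧ ∃ w₁ w₂, w₁ ≠ w₂ ∧ G.Adj a w₁ ∧ G.Adj a w₂ ∧ w₁ ∉ B ∧ w₂ ∉ B

end ZqGame

namespace ZqGame

variable {V : Type*}

/-- `Win G q B t` : in the `Z_q`-forcing game on `G` starting from blue set `B`,
Blue has a strategy spending at most `t` tokens that colors every vertex blue
against any (adversarial) play by White.
* `all` : every vertex is already blue.
* `rule1` : spend one token to color an arbitrary vertex blue.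
* `rule2` : a blue vertex with exactly one white neighbor forces it, for free.
* `rule3` : Blue announces a collection `𝒲` of at least `q + 1` white components;
  for every nonempty sub-collection `𝒮` that White may return, Blue can perform a
  Rule 2 force (`vf 𝒮 → wf 𝒮`) on the subgraph induced by `B` together with `⋃ 𝒮`,
  and continue from the resulting position. -/
inductive Win (G : SimpleGraph V) (q : ℕ) : Set V → ℕ → Prop
  | all (B : Set V) (t : ℕ) : (∀ v, v ∈ B) → Win G q B t
  | rule1 (B : Set V) (t : ℕ) (v : V) : Win G q (insert v B) t → Win G q B (t + 1)
  | rule2 (B : Set V) (t : ℕ) (v w : V) :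
      Force G B v w → Win G q (insert w B) t → Win G q B t
  | rule3 (B : Set V) (t : ℕ) (𝒲 : Finset (Set V))
      (vf wf : Finset (Set V) → V) :
      (∀ W ∈ 𝒲, IsWhiteComp G B W) → q + 1 ≤ 𝒲.card →
      (∀ 𝒮 : Finset (Set V), 𝒮 ⊆ 𝒲 → 𝒮.Nonempty →
        ForceIn G B (⋃₀ (𝒮 : Set (Set V))) (vf 𝒮) (wf 𝒮)) →
      (∀ 𝒮 : Finset (Set V), 𝒮 ⊆ 𝒲 → 𝒮.Nonempty →
        Win G q (insert (wf 𝒮) B) t) →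
      Win G q B t

/-- `Z_q(G, B)` : the minimum number of additional tokens Blue must spend to win the
`Z_q`-forcing game on `G` starting from blue set `B`. -/
noncomputable def cost (G : SimpleGraph V) (q : ℕ) (B : Set V) : ℕ :=
  sInf {t | Win G q B t}

/-- `Z_q(G)` : the `Z_q`-forcing number of `G`. -/
noncomputable def Zq (G : SimpleGraph V) (q : ℕ) : ℕ := cost G q ∅

end ZqGame

namespace ZqGame

variable {V : Type*}

lemma wrel_symm (G : SimpleGraph V) (B : Set V) :
    Symmetric (fun a b => G.Adj a b ∧ a ∉ B ∧ b ∉ B) :=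
  fun _ _ h => ⟨h.1.symm, h.2.2, h.2.1⟩

lemma mem_whiteComp_self (G : SimpleGraph V) (B : Set V) (x : V) : x ∈ WhiteComp G B x :=
  Relation.ReflTransGen.refl

lemma whiteComp_eq_of_mem {G : SimpleGraph V} {B : Set V} {x y : V}
    (h : y ∈ WhiteComp G B x) : WhiteComp G B x = WhiteComp G B y := by
  have hsym : Symmetric (Relation.ReflTransGen (fun a b => G.Adj a b ∧ a ∉ B ∧ b ∉ B)) :=
    fun a b h => (@Relation.ReflTransGen.stdSymm _ _ ⟨fun a b h => wrel_symm G B h⟩).symm a b h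
  ext z
  exact ⟨fun hz => Relation.ReflTransGen.trans (hsym h) hz,
         fun hz => Relation.ReflTransGen.trans h hz⟩

lemma whiteComp_del_subset (G : SimpleGraph V) (v w : V) (B : Set V) (x : V) :
    WhiteComp (G.deleteEdges {s(v,w)}) B x ⊆ WhiteComp G B x := by
  intro y hy
  exact Relation.ReflTransGen.mono
    (r := fun a b => (G.deleteEdges {s(v,w)}).Adj a b ∧ a ∉ B ∧ b ∉ B)
    (p := fun a b => G.Adj a b ∧ a ∉ B ∧ b ∉ B)
    (fun a b hab => ⟨(deleteEdges_adj.mp hab.1).1, hab.2.1, hab.2.2⟩) _ _ hy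


lemma adj_del_iff {G : SimpleGraph V} {v w a b : V} :
    (G.deleteEdges {s(v,w)}).Adj a b ↔ G.Adj a b ∧ s(a,b) ≠ s(v,w) := by
  simp [deleteEdges_adj]

lemma whiteComp_del_eq_of_rel {G : SimpleGraph V} {v w : V} {B : Set V}
    (h : ∀ a b : V, G.Adj a b → a ∉ B → b ∉ B →
      Relation.ReflTransGen
        (fun a b => (G.deleteEdges {s(v,w)}).Adj a b ∧ a ∉ B ∧ b ∉ B) a b)
    (x : V) : WhiteComp G B x = WhiteComp (G.deleteEdges {s(v,w)}) B x := by
  apply Set.Subset.antisymm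
  · intro y hy
    induction hy with
    | refl => exact Relation.ReflTransGen.refl
    | tail hxb hbc ih => exact Relation.ReflTransGen.trans ih (h _ _ hbc.1 hbc.2.1 hbc.2.2)
  · exact whiteComp_del_subset G v w B x

lemma whiteComp_del_eq_of_blue {G : SimpleGraph V} {v w : V} {B : Set V}
    (hvw : v ∈ B ∨ w ∈ B) (x : V) :
    WhiteComp G B x = WhiteComp (G.deleteEdges {s(v,w)}) B x := by
  apply whiteComp_del_eq_of_rel
  intro a b hab ha hb
  refine Relation.ReflTransGen.single ⟨adj_del_iff.mpr ⟨hab, ?_⟩, ha, hb⟩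
  intro hs
  rcases Sym2.eq_iff.mp hs with ⟨rfl, rfl⟩ | ⟨rfl, rfl⟩
  · rcases hvw with h | h; exacts [ha h, hb h]
  · rcases hvw with h | h; exacts [hb h, ha h]

lemma whiteComp_del_eq_of_conn {G : SimpleGraph V} {v w : V} {B : Set V}
    (hconn : w ∈ WhiteComp (G.deleteEdges {s(v,w)}) B v) (x : V) :
    WhiteComp G B x = WhiteComp (G.deleteEdges {s(v,w)}) B x := by
  apply whiteComp_del_eq_of_rel
  intro a b hab ha hb
  by_cases hs : s(a,b) = s(v,w)
  · rcases Sym2.eq_iff.mp hs with ⟨h1, h2⟩ | ⟨h1, h2⟩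
    · rw [h1, h2]; exact hconn
    · rw [h1, h2]
      exact (@Relation.ReflTransGen.stdSymm _ _ ⟨fun a b h => wrel_symm _ _ h⟩).symm _ _ hconn
  · exact Relation.ReflTransGen.single ⟨adj_del_iff.mpr ⟨hab, hs⟩, ha, hb⟩

lemma whiteComp_del_eq_of_not_mem {G : SimpleGraph V} {v w : V} {B : Set V} {x : V}
    (hvx : v ∉ WhiteComp G B x) (hwx : w ∉ WhiteComp G B x) :
    WhiteComp G B x = WhiteComp (G.deleteEdges {s(v,w)}) B x := by
  apply Set.Subset.antisymm
  · intro y hy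
    induction hy with
    | refl => exact Relation.ReflTransGen.refl
    | @tail b c hxb hbc ih =>
      have hs : s(b,c) ≠ s(v,w) := by
        intro hs
        rcases Sym2.eq_iff.mp hs with ⟨rfl, rfl⟩ | ⟨rfl, rfl⟩
        · exact hvx hxb
        · exact hvx (Relation.ReflTransGen.tail hxb hbc)
      exact Relation.ReflTransGen.tail ih ⟨adj_del_iff.mpr ⟨hbc.1, hs⟩, hbc.2.1, hbc.2.2⟩
  · exact whiteComp_del_subset G v w B x

lemma whiteComp_del_union {G : SimpleGraph V} {v w : V} {B : Set V}
    (he : G.Adj v w) (hv : v ∉ B) (hw : w ∉ B) :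
    WhiteComp G B v =
      WhiteComp (G.deleteEdges {s(v,w)}) B v ∪ WhiteComp (G.deleteEdges {s(v,w)}) B w := by
  apply Set.Subset.antisymm
  · intro y hy
    induction hy with
    | refl => exact Or.inl (mem_whiteComp_self _ _ _)
    | @tail b c hxb hbc ih =>
      by_cases hs : s(b,c) = s(v,w)
      · rcases Sym2.eq_iff.mp hs with ⟨rfl, rfl⟩ | ⟨rfl, rfl⟩
        · exact Or.inr (mem_whiteComp_self _ _ _)
        · exact Or.inl (mem_whiteComp_self _ _ _)
      · have step : (G.deleteEdges {s(v,w)}).Adj b c ∧ b ∉ B ∧ c ∉ B :=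
          ⟨adj_del_iff.mpr ⟨hbc.1, hs⟩, hbc.2.1, hbc.2.2⟩
        rcases ih with h | h
        · exact Or.inl (Relation.ReflTransGen.tail h step)
        · exact Or.inr (Relation.ReflTransGen.tail h step)
  · apply Set.union_subset
    · exact whiteComp_del_subset G v w B v
    · intro y hy
      exact Relation.ReflTransGen.trans (Relation.ReflTransGen.single ⟨he, hv, hw⟩)
        (whiteComp_del_subset G v w B w hy)

lemma mem_whiteComp_of_adj {G : SimpleGraph V} {v w : V} {B : Set V}
    (he : G.Adj v w) (hv : v ∉ B) (hw : w ∉ B) : w ∈ WhiteComp G B v :=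
  Relation.ReflTransGen.single ⟨he, hv, hw⟩

lemma forceIn_del {G : SimpleGraph V} {v w : V} {B Wa Wa' : Set V} {a b : V}
    (hf : ForceIn G B Wa a b) (hb : b ∈ Wa') (hsub : Wa' ⊆ Wa)
    (hne : s(a,b) ≠ s(v,w)) : ForceIn (G.deleteEdges {s(v,w)}) B Wa' a b :=
  ⟨hf.1, hf.2.1, hb, adj_del_iff.mpr ⟨hf.2.2.2.1, hne⟩,
   fun u hu h1 h2 => hf.2.2.2.2 u (adj_del_iff.mp hu).1 h1 (hsub h2)⟩

lemma win_del_of_mem {G : SimpleGraph V} {v w : V} {q : ℕ} {B : Set V} {t : ℕ}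
    (hW : Win G q B t) : v ∈ B → w ∈ B → Win (G.deleteEdges {s(v,w)}) q B t := by
  induction hW with
  | all B t h => exact fun _ _ => Win.all B t h
  | rule1 B t x h ih =>
    exact fun hv hw => Win.rule1 B t x
      (ih (Set.mem_insert_of_mem _ hv) (Set.mem_insert_of_mem _ hw))
  | rule2 B t a b hf h ih =>
    intro hv hw
    obtain ⟨ha, hb, -, hadj, huniq⟩ := hf
    have hne : s(a,b) ≠ s(v,w) := by
      intro hs
      rcases Sym2.eq_iff.mp hs with ⟨h1, h2⟩ | ⟨h1, h2⟩
      · exact hb (h2 ▸ hw)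
      · exact hb (h2 ▸ hv)
    exact Win.rule2 B t a b
      (forceIn_del ⟨ha, hb, Set.mem_univ _, hadj, huniq⟩ (Set.mem_univ _)
        subset_rfl hne)
      (ih (Set.mem_insert_of_mem _ hv) (Set.mem_insert_of_mem _ hw))
  | rule3 B t 𝒲 vf wf hcomp hcard hforce hwin ih =>
    intro hv hw
    refine Win.rule3 B t 𝒲 vf wf ?_ hcard ?_ ?_
    · rintro W hWm
      obtain ⟨x, hx, rfl⟩ := hcomp W hWm
      exact ⟨x, hx, whiteComp_del_eq_of_blue (Or.inl hv) x⟩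
    · intro 𝒮 h1 h2
      have hf := hforce 𝒮 h1 h2
      have hne : s(vf 𝒮, wf 𝒮) ≠ s(v,w) := by
        intro hs
        rcases Sym2.eq_iff.mp hs with ⟨h3, h4⟩ | ⟨h3, h4⟩
        · exact hf.2.1 (h4 ▸ hw)
        · exact hf.2.1 (h4 ▸ hv)
      exact forceIn_del hf hf.2.2.1 subset_rfl hne
    · intro 𝒮 h1 h2
      exact ih 𝒮 h1 h2 (Set.mem_insert_of_mem _ hv) (Set.mem_insert_of_mem _ hw)
lemma win_del {G : SimpleGraph V} {v w : V} (he : G.Adj v w) {q : ℕ} {B : Set V} {t : ℕ}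
    (hW : Win G q B t) : Win (G.deleteEdges {s(v,w)}) q B (t + 1) := by
  classical
  induction hW with
  | all B t h => exact Win.all B (t+1) h
  | rule1 B t x h ih => exact Win.rule1 B (t+1) x ih
  | rule2 B t a b hf h ih =>
    by_cases hs : s(a,b) = s(v,w)
    · obtain ⟨ha, hb, -, -, -⟩ := hf
      refine Win.rule1 B t b (win_del_of_mem h ?_ ?_)
      · rcases Sym2.eq_iff.mp hs with ⟨h1, h2⟩ | ⟨h1, h2⟩
        · exact h1 ▸ Set.mem_insert_of_mem _ ha
        · exact h2 ▸ Set.mem_insert _ _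
      · rcases Sym2.eq_iff.mp hs with ⟨h1, h2⟩ | ⟨h1, h2⟩
        · exact h2 ▸ Set.mem_insert _ _
        · exact h1 ▸ Set.mem_insert_of_mem _ ha
    · exact Win.rule2 B (t+1) a b
        (forceIn_del hf (Set.mem_univ _) subset_rfl hs) ih
  | rule3 B t 𝒲 vf wf hcomp hcard hforce hwin ih =>
    by_cases hcross : ∃ 𝒮 : Finset (Set V), 𝒮 ⊆ 𝒲 ∧ 𝒮.Nonempty ∧ s(vf 𝒮, wf 𝒮) = s(v,w)
    · obtain ⟨𝒮₀, h1, h2, h3⟩ := hcross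
      have hf := hforce 𝒮₀ h1 h2
      refine Win.rule1 B t (wf 𝒮₀) (win_del_of_mem (hwin 𝒮₀ h1 h2) ?_ ?_)
      · rcases Sym2.eq_iff.mp h3 with ⟨h4, h5⟩ | ⟨h4, h5⟩
        · exact h4 ▸ Set.mem_insert_of_mem _ hf.1
        · exact h5 ▸ Set.mem_insert _ _
      · rcases Sym2.eq_iff.mp h3 with ⟨h4, h5⟩ | ⟨h4, h5⟩
        · exact h5 ▸ Set.mem_insert _ _
        · exact h4 ▸ Set.mem_insert_of_mem _ hf.1
    · push_neg at hcross
      -- no force across the deleted edge ever occurs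
      by_cases hvB : v ∈ B ∨ w ∈ B
      · -- components unchanged; replay the same move
        refine Win.rule3 B (t+1) 𝒲 vf wf ?_ hcard ?_ ih
        · rintro W hWm
          obtain ⟨x, hx, rfl⟩ := hcomp W hWm
          exact ⟨x, hx, whiteComp_del_eq_of_blue hvB x⟩
        · intro 𝒮 h1 h2
          exact forceIn_del (hforce 𝒮 h1 h2) (hforce 𝒮 h1 h2).2.2.1 subset_rfl
            (hcross 𝒮 h1 h2)
      · push_neg at hvB
        obtain ⟨hv, hw⟩ := hvB
        by_cases hconn : w ∈ WhiteComp (G.deleteEdges {s(v,w)}) B v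
        · refine Win.rule3 B (t+1) 𝒲 vf wf ?_ hcard ?_ ih
          · rintro W hWm
            obtain ⟨x, hx, rfl⟩ := hcomp W hWm
            exact ⟨x, hx, whiteComp_del_eq_of_conn hconn x⟩
          · intro 𝒮 h1 h2
            exact forceIn_del (hforce 𝒮 h1 h2) (hforce 𝒮 h1 h2).2.2.1 subset_rfl
              (hcross 𝒮 h1 h2)
        · -- split case
          set W₀ : Set V := WhiteComp G B v with hW₀def
          have hwW₀ : w ∈ W₀ := mem_whiteComp_of_adj he hv hw
          have hsplit : W₀ = WhiteComp (G.deleteEdges {s(v,w)}) B v ∪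
              WhiteComp (G.deleteEdges {s(v,w)}) B w := whiteComp_del_union he hv hw
          -- members of 𝒲 other than W₀ contain neither v nor w
          have hnomem : ∀ W ∈ 𝒲, W ≠ W₀ → v ∉ W ∧ w ∉ W := by
            intro W hWm hWne
            obtain ⟨x, hx, rfl⟩ := hcomp W hWm
            constructor
            · intro hvW
              exact hWne (whiteComp_eq_of_mem hvW)
            · intro hwW
              refine hWne ?_
              rw [whiteComp_eq_of_mem hwW, hW₀def, whiteComp_eq_of_mem hwW₀]
          by_cases hW₀m : W₀ ∈ 𝒲
          · -- the interesting case: W₀ splits into two components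
            -- `Good H T` : Blue has a suitable reply when White returns `T ∪ {H}`
            have hgood : (∀ T ⊆ 𝒲.erase W₀, ∃ 𝒮₁, 𝒮₁ ⊆ 𝒲 ∧ insert W₀ T ⊆ 𝒮₁ ∧
                  wf 𝒮₁ ∈ ⋃₀ (T : Set (Set V)) ∪ WhiteComp (G.deleteEdges {s(v,w)}) B v) ∨
                (∀ T ⊆ 𝒲.erase W₀, ∃ 𝒮₁, 𝒮₁ ⊆ 𝒲 ∧ insert W₀ T ⊆ 𝒮₁ ∧
                  wf 𝒮₁ ∈ ⋃₀ (T : Set (Set V)) ∪ WhiteComp (G.deleteEdges {s(v,w)}) B w) := by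
              by_contra hcon
              push_neg at hcon
              obtain ⟨⟨T₁, hT₁, hbad₁⟩, ⟨T₂, hT₂, hbad₂⟩⟩ := hcon
              set 𝒮₁ : Finset (Set V) := insert W₀ (T₁ ∪ T₂) with h𝒮₁
              have hs1 : 𝒮₁ ⊆ 𝒲 := by
                refine Finset.insert_subset hW₀m ?_
                exact (Finset.union_subset hT₁ hT₂).trans (Finset.erase_subset _ _)
              have hs1ne : 𝒮₁.Nonempty := ⟨W₀, Finset.mem_insert_self _ _⟩
              have hmem := (hforce 𝒮₁ hs1 hs1ne).2.2.1
              have hA := hbad₁ 𝒮₁ hs1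
                (Finset.insert_subset_insert _ Finset.subset_union_left)
              have hB := hbad₂ 𝒮₁ hs1
                (Finset.insert_subset_insert _ Finset.subset_union_right)
              have hUeq : ⋃₀ (𝒮₁ : Set (Set V)) =
                  (WhiteComp (G.deleteEdges {s(v,w)}) B v ∪
                    WhiteComp (G.deleteEdges {s(v,w)}) B w) ∪
                  (⋃₀ (T₁ : Set (Set V)) ∪ ⋃₀ (T₂ : Set (Set V))) := by
                rw [h𝒮₁, Finset.coe_insert, Set.sUnion_insert, Finset.coe_union,
                  Set.sUnion_union, hsplit]
              rw [hUeq] at hmem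
              rcases hmem with (h | h) | (h | h)
              · exact hA (Or.inr h)
              · exact hB (Or.inr h)
              · exact hA (Or.inl h)
              · exact hB (Or.inl h)
            -- a uniform construction for either half
            have construct : ∀ H : Set V,
                IsWhiteComp (G.deleteEdges {s(v,w)}) B H → H ⊆ W₀ → H ∉ 𝒲.erase W₀ →
                (∀ T ⊆ 𝒲.erase W₀, ∃ 𝒮₁, 𝒮₁ ⊆ 𝒲 ∧ insert W₀ T ⊆ 𝒮₁ ∧
                  wf 𝒮₁ ∈ ⋃₀ (T : Set (Set V)) ∪ H) →
                Win (G.deleteEdges {s(v,w)}) q B (t+1) := by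
              intro H hHcomp hHsub hHnm hHgood
              set 𝒲' : Finset (Set V) := insert H (𝒲.erase W₀) with h𝒲'
              have hcard' : q + 1 ≤ 𝒲'.card := by
                rw [h𝒲', Finset.card_insert_of_notMem hHnm,
                  Finset.card_erase_add_one hW₀m]
                exact hcard
              have key : ∀ 𝒮' : Finset (Set V), 𝒮' ⊆ 𝒲' → 𝒮'.Nonempty →
                  ∃ p : V × V, ForceIn (G.deleteEdges {s(v,w)}) B
                    (⋃₀ (𝒮' : Set (Set V))) p.1 p.2 ∧
                    Win (G.deleteEdges {s(v,w)}) q (insert p.2 B) (t+1) := by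
                intro 𝒮' hsub hne
                by_cases hH : H ∈ 𝒮'
                · set T : Finset (Set V) := 𝒮'.erase H with hT
                  have hTsub : T ⊆ 𝒲.erase W₀ := by
                    intro x hx
                    have hx1 := Finset.mem_of_mem_erase hx
                    have hx2 := Finset.ne_of_mem_erase hx
                    rcases Finset.mem_insert.mp (hsub hx1) with h | h
                    · exact absurd h hx2
                    · exact h
                  obtain ⟨𝒮₁, hs1, hs2, hs3⟩ := hHgood T hTsub
                  have hs1ne : 𝒮₁.Nonempty := ⟨W₀, hs2 (Finset.mem_insert_self _ _)⟩
                  have hf := hforce 𝒮₁ hs1 hs1ne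
                  have hsU : ⋃₀ (𝒮' : Set (Set V)) = ⋃₀ (T : Set (Set V)) ∪ H := by
                    conv_lhs => rw [← Finset.insert_erase hH]
                    rw [Finset.coe_insert, Set.sUnion_insert, ← hT, Set.union_comm]
                  have hsub2 : ⋃₀ (𝒮' : Set (Set V)) ⊆ ⋃₀ (𝒮₁ : Set (Set V)) := by
                    rw [hsU]
                    apply Set.union_subset
                    · apply Set.sUnion_subset_sUnion
                      intro x hx
                      exact hs2 (Finset.mem_insert_of_mem (by exact_mod_cast hx))
                    · exact hHsub.trans
                        (Set.subset_sUnion_of_mem (by exact_mod_cast hs2 (Finset.mem_insert_self _ _)))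
                  have hbW : wf 𝒮₁ ∈ ⋃₀ (𝒮' : Set (Set V)) := by rw [hsU]; exact hs3
                  exact ⟨(vf 𝒮₁, wf 𝒮₁),
                    forceIn_del hf hbW hsub2 (hcross 𝒮₁ hs1 hs1ne), ih 𝒮₁ hs1 hs1ne⟩
                · have hsub' : 𝒮' ⊆ 𝒲 := by
                    intro x hx
                    rcases Finset.mem_insert.mp (hsub hx) with h | h
                    · exact absurd (h ▸ hx) hH
                    · exact Finset.mem_of_mem_erase h
                  have hf := hforce 𝒮' hsub' hne
                  exact ⟨(vf 𝒮', wf 𝒮'),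
                    forceIn_del hf hf.2.2.1 subset_rfl (hcross 𝒮' hsub' hne),
                    ih 𝒮' hsub' hne⟩
              -- package `key` into strategy functions
              set P : Finset (Set V) → Prop := fun 𝒮' =>
                ∃ p : V × V, ForceIn (G.deleteEdges {s(v,w)}) B
                  (⋃₀ (𝒮' : Set (Set V))) p.1 p.2 ∧
                  Win (G.deleteEdges {s(v,w)}) q (insert p.2 B) (t+1) with hP
              refine Win.rule3 B (t+1) 𝒲'
                (fun 𝒮' => if h : P 𝒮' then h.choose.1 else v)
                (fun 𝒮' => if h : P 𝒮' then h.choose.2 else v)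
                ?_ hcard' ?_ ?_
              · rintro W hWm
                rcases Finset.mem_insert.mp hWm with h | h
                · exact h ▸ hHcomp
                · obtain ⟨x, hx, rfl⟩ := hcomp W (Finset.mem_of_mem_erase h)
                  have hnm := hnomem _ (Finset.mem_of_mem_erase h) (Finset.ne_of_mem_erase h)
                  exact ⟨x, hx, whiteComp_del_eq_of_not_mem hnm.1 hnm.2⟩
              · intro 𝒮' h1 h2
                have hp : P 𝒮' := key 𝒮' h1 h2
                simp only [dif_pos hp]
                exact hp.choose_spec.1
              · intro 𝒮' h1 h2
                have hp : P 𝒮' := key 𝒮' h1 h2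
                simp only [dif_pos hp]
                exact hp.choose_spec.2
            rcases hgood with hg | hg
            · refine construct (WhiteComp (G.deleteEdges {s(v,w)}) B v)
                ⟨v, hv, rfl⟩ (hsplit ▸ Set.subset_union_left) ?_ hg
              intro hmem
              exact (hnomem _ (Finset.mem_of_mem_erase hmem)
                (Finset.ne_of_mem_erase hmem)).1 (mem_whiteComp_self _ _ _)
            · refine construct (WhiteComp (G.deleteEdges {s(v,w)}) B w)
                ⟨w, hw, rfl⟩ (hsplit ▸ Set.subset_union_right) ?_ hg
              intro hmem
              exact (hnomem _ (Finset.mem_of_mem_erase hmem)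
                (Finset.ne_of_mem_erase hmem)).2 (mem_whiteComp_self _ _ _)
          · -- W₀ is not announced: all announced components are untouched
            refine Win.rule3 B (t+1) 𝒲 vf wf ?_ hcard ?_ ih
            · rintro W hWm
              have hWne : W ≠ W₀ := fun h => hW₀m (h ▸ hWm)
              obtain ⟨x, hx, hXeq⟩ := hcomp W hWm
              have hnm := hnomem W hWm hWne
              rw [hXeq] at hnm ⊢
              exact ⟨x, hx, whiteComp_del_eq_of_not_mem hnm.1 hnm.2⟩
            · intro 𝒮 h1 h2
              exact forceIn_del (hforce 𝒮 h1 h2) (hforce 𝒮 h1 h2).2.2.1 subset_rfl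
                (hcross 𝒮 h1 h2)
lemma win_compl_finite {G : SimpleGraph V} {q : ℕ} {B : Set V} {t : ℕ}
    (h : Win G q B t) : Set.Finite Bᶜ := by
  induction h with
  | all B t h =>
    have : Bᶜ = ∅ := by ext x; simp [h x]
    rw [this]; exact Set.finite_empty
  | rule1 B t x h ih =>
    refine Set.Finite.subset (ih.insert x) ?_
    intro y hy
    by_cases hx : y = x
    · exact hx ▸ Set.mem_insert _ _
    · exact Set.mem_insert_of_mem _ (by simp [Set.mem_compl_iff, hx] at hy ⊢; tauto)
  | rule2 B t a b hf h ih =>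
    refine Set.Finite.subset (ih.insert b) ?_
    intro y hy
    by_cases hx : y = b
    · exact hx ▸ Set.mem_insert _ _
    · exact Set.mem_insert_of_mem _ (by simp [Set.mem_compl_iff, hx] at hy ⊢; tauto)
  | rule3 B t 𝒲 vf wf hcomp hcard hforce hwin ih =>
    have hne : 𝒲.Nonempty := Finset.card_pos.mp (lt_of_lt_of_le (Nat.succ_pos q) hcard)
    obtain ⟨W, hW⟩ := hne
    have hsub : ({W} : Finset (Set V)) ⊆ 𝒲 := Finset.singleton_subset_iff.mpr hW
    have h1 := ih {W} hsub ⟨W, Finset.mem_singleton_self W⟩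
    refine Set.Finite.subset (h1.insert (wf {W})) ?_
    intro y hy
    by_cases hx : y = wf {W}
    · exact hx ▸ Set.mem_insert _ _
    · exact Set.mem_insert_of_mem _ (by simp [Set.mem_compl_iff, hx] at hy ⊢; tauto)

lemma win_of_ncard_le (G : SimpleGraph V) (q : ℕ) (hfin : (Set.univ : Set V).Finite) :
    ∀ (n : ℕ) (B : Set V), Bᶜ.ncard ≤ n → Win G q B n := by
  intro n
  induction n with
  | zero =>
    intro B hB
    refine Win.all B 0 ?_
    have hfc : Bᶜ.Finite := hfin.subset (Set.subset_univ _)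
    have : Bᶜ = ∅ := (Set.ncard_eq_zero hfc).mp (Nat.le_zero.mp hB)
    intro x
    by_contra hx
    exact absurd (this ▸ hx : x ∈ (∅ : Set V)) (Set.notMem_empty x)
  | succ n ih =>
    intro B hB
    by_cases hall : ∀ x, x ∈ B
    · exact Win.all B (n+1) hall
    · push_neg at hall
      obtain ⟨x, hx⟩ := hall
      refine Win.rule1 B n x (ih _ ?_)
      have hfc : Bᶜ.Finite := hfin.subset (Set.subset_univ _)
      have hins : (insert x B)ᶜ = Bᶜ \ {x} := by
        ext y; simp [Set.mem_compl_iff, and_comm]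
      rw [hins]
      have := Set.ncard_diff_singleton_add_one (Set.mem_compl hx) hfc
      omega

theorem Zq_del_aux {V' : Type*} (G : SimpleGraph V') (v w : V')
    (he : G.Adj v w) (q : ℕ) :
    ZqGame.Zq (G.deleteEdges {s(v, w)}) q ≤ ZqGame.Zq G q + 1 := by
  by_cases hwin : ∃ t, Win G q (∅ : Set V') t
  · have hmem : Win G q ∅ (Zq G q) := by
      have := Nat.sInf_mem hwin
      exact this
    have h2 : Win (G.deleteEdges {s(v,w)}) q ∅ (Zq G q + 1) := win_del he hmem
    show sInf {t | Win (G.deleteEdges {s(v,w)}) q (∅ : Set V') t} ≤ _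
    exact Nat.sInf_le h2
  · have hnone : ∀ t, ¬ Win (G.deleteEdges {s(v,w)}) q (∅ : Set V') t := by
      intro t ht
      have hfin : (Set.univ : Set V').Finite := by
        have := win_compl_finite ht
        rwa [Set.compl_empty] at this
      exact hwin ⟨(∅ : Set V')ᶜ.ncard, win_of_ncard_le G q hfin _ _ le_rfl⟩
    have hempty : {t | Win (G.deleteEdges {s(v,w)}) q (∅ : Set V') t} = ∅ := by
      ext t; simp [hnone t]
    show sInf {t | Win (G.deleteEdges {s(v,w)}) q (∅ : Set V') t} ≤ _
    rw [hempty, Nat.sInf_empty]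
    exact Nat.zero_le _

end ZqGame

open SimpleGraph

/-- Edge deletion can increase `Z_q` by at most `1`:
for any edge `vw` of `G`, `Z_q(G - vw) ≤ Z_q(G) + 1`. -/
theorem Zq_deleteEdge_le_Zq_add_one {V : Type*} (G : SimpleGraph V) (v w : V)
    (he : G.Adj v w) (q : ℕ) :
    ZqGame.Zq (G.deleteEdges {s(v, w)}) q ≤ ZqGame.Zq G q + 1 :=
  ZqGame.Zq_del_aux G v w he q
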